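/- For positive integers s, r, k, N, one has Σ_{n ≤ N} c_r^s(n) c_k^s(n) ≤ N · τ_s(r^s) · τ_s(k^s) · (r^s, k^s)_s. -/

import Mathlib

open Finset

/-- Generalized s-GCD `(a,b)_s`: the largest `l^s` dividing both `a` and `b`. -/
def sgcd (s a b : ℕ) : ℕ :=
  (Nat.findGreatest (fun l => l ^ s ∣ a ∧ l ^ s ∣ b) (Nat.gcd a b)) ^ s

/-- Klee's function `Φ_s(n)`. -/
def klee (s n : ℕ) : ℕ := ((Finset.Icc 1 n).filter (fun m => sgcd s m n = 1)).card

/-- Cohen–Ramanujan sum (exponential form). -/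
noncomputable def CRsum (s r n : ℕ) : ℂ :=
  ∑ a ∈ (Finset.Icc 1 (r ^ s)).filter (fun a => sgcd s a (r ^ s) = 1),
    Complex.exp (2 * Real.pi * Complex.I * n * a / (r ^ s))

/-- Cohen–Ramanujan sum (divisor form). -/
def CRsumD (s r n : ℕ) : ℤ :=
  ∑ d ∈ r.divisors.filter (fun d => d ^ s ∣ n),
    ArithmeticFunction.moebius (r / d) * (d : ℤ) ^ s

/-- `τ_s(m)`: number of s-th powers dividing `m`. -/
def taus (s m : ℕ) : ℕ := ((Finset.Icc 1 m).filter (fun l => l ^ s ∣ m)).card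

/-- Jordan totient via tuples. -/
def jordanT (s r : ℕ) : ℕ :=
  (Finset.univ.filter (fun v : Fin s → Fin r =>
    Nat.gcd (Finset.univ.gcd (fun i => (v i : ℕ))) r = 1)).card

lemma taus_pow_eq (s r : ℕ) (hs : 0 < s) (hr : 0 < r) :
    taus s (r ^ s) = r.divisors.card := by
  unfold taus
  congr 1
  ext l
  simp only [mem_filter, mem_Icc, Nat.mem_divisors]
  constructor
  · rintro ⟨⟨h1, h2⟩, h3⟩
    exact ⟨(Nat.pow_dvd_pow_iff hs.ne').mp h3, hr.ne'⟩
  · rintro ⟨hdvd, -⟩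
    have hl : 0 < l := Nat.pos_of_dvd_of_pos hdvd hr
    exact ⟨⟨hl, le_trans (Nat.le_of_dvd hr hdvd) (Nat.le_self_pow hs.ne' r)⟩,
      pow_dvd_pow_of_dvd hdvd s⟩

lemma gcd_pow_eq (d e s : ℕ) (hd : 0 < d) :
    Nat.gcd (d ^ s) (e ^ s) = Nat.gcd d e ^ s := by
  have hg : 0 < Nat.gcd d e := Nat.gcd_pos_of_pos_left _ hd
  have hco : Nat.Coprime (d / Nat.gcd d e) (e / Nat.gcd d e) := Nat.coprime_div_gcd_div_gcd hg
  have h1 : d = d / Nat.gcd d e * Nat.gcd d e := (Nat.div_mul_cancel (Nat.gcd_dvd_left d e)).symm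
  have h2 : e = e / Nat.gcd d e * Nat.gcd d e := (Nat.div_mul_cancel (Nat.gcd_dvd_right d e)).symm
  calc Nat.gcd (d ^ s) (e ^ s)
      = Nat.gcd ((d / Nat.gcd d e) ^ s * Nat.gcd d e ^ s)
          ((e / Nat.gcd d e) ^ s * Nat.gcd d e ^ s) := by rw [← mul_pow, ← mul_pow, ← h1, ← h2]
    _ = Nat.gcd d e ^ s := by
        rw [Nat.gcd_mul_right, Nat.Coprime.gcd_eq_one (Nat.Coprime.pow s s hco), one_mul]

lemma CRsumD_abs_le (s m n : ℕ) :
    |CRsumD s m n| ≤ ((∑ d ∈ m.divisors.filter (fun d => d ^ s ∣ n), d ^ s : ℕ) : ℤ) := by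
  rw [CRsumD]
  refine (Finset.abs_sum_le_sum_abs _ _).trans ?_
  push_cast
  refine Finset.sum_le_sum fun d hd => ?_
  rw [abs_mul, abs_pow, Int.abs_natCast]
  calc |(ArithmeticFunction.moebius (m / d) : ℤ)| * (d : ℤ) ^ s
      ≤ 1 * (d : ℤ) ^ s :=
        mul_le_mul_of_nonneg_right ArithmeticFunction.abs_moebius_le_one (by positivity)
    _ = (d : ℤ) ^ s := one_mul _

theorem sum_CRsumD_mul_le (s r k N : ℕ) (hs : 0 < s) (hr : 0 < r) (hk : 0 < k)
    (hN : 0 < N) :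
    (∑ n ∈ Finset.Icc 1 N, CRsumD s r n * CRsumD s k n)
      ≤ (N : ℤ) * taus s (r ^ s) * taus s (k ^ s) * sgcd s (r ^ s) (k ^ s) := by
  classical
  set G := sgcd s (r ^ s) (k ^ s) with hG
  -- key counting bound per divisor pair, in ℕ
  have count_bound : ∀ d ∈ r.divisors, ∀ e ∈ k.divisors,
      d ^ s * e ^ s * ((Finset.Icc 1 N).filter (fun n => d ^ s ∣ n ∧ e ^ s ∣ n)).card
        ≤ N * G := by
    intro d hd e he
    rw [Nat.mem_divisors] at hd he
    have hd0 : 0 < d := Nat.pos_of_dvd_of_pos hd.1 hr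
    have he0 : 0 < e := Nat.pos_of_dvd_of_pos he.1 hk
    set L := Nat.lcm (d ^ s) (e ^ s) with hL
    have hcard : ((Finset.Icc 1 N).filter (fun n => d ^ s ∣ n ∧ e ^ s ∣ n)).card = N / L := by
      have h1 : (Finset.Icc 1 N) = Finset.Ioc 0 N := by ext x; simp only [Finset.mem_Icc, Finset.mem_Ioc]; omega
      rw [h1]
      have h2 : (Finset.Ioc 0 N).filter (fun n => d ^ s ∣ n ∧ e ^ s ∣ n)
          = (Finset.Ioc 0 N).filter (fun n => L ∣ n) :=
        Finset.filter_congr fun n _ => by rw [hL, Nat.lcm_dvd_iff]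
      rw [h2]
      exact Nat.Ioc_filter_dvd_card_eq_div N L
    have hgcd_le : Nat.gcd (d ^ s) (e ^ s) ≤ G := by
      rw [gcd_pow_eq d e s hd0, hG, sgcd]
      refine Nat.pow_le_pow_left ?_ s
      have hdvd1 : Nat.gcd d e ^ s ∣ r ^ s := pow_dvd_pow_of_dvd ((Nat.gcd_dvd_left d e).trans hd.1) s
      have hdvd2 : Nat.gcd d e ^ s ∣ k ^ s := pow_dvd_pow_of_dvd ((Nat.gcd_dvd_right d e).trans he.1) s
      have hgpos : 0 < Nat.gcd d e := Nat.gcd_pos_of_pos_left _ hd0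
      have hle : Nat.gcd d e ≤ Nat.gcd (r ^ s) (k ^ s) := by
        refine Nat.le_of_dvd (Nat.gcd_pos_of_pos_left _ (pow_pos hr s)) ?_
        exact (dvd_pow_self _ hs.ne').trans (Nat.dvd_gcd hdvd1 hdvd2)
      exact Nat.le_findGreatest hle ⟨hdvd1, hdvd2⟩
    calc d ^ s * e ^ s * ((Finset.Icc 1 N).filter (fun n => d ^ s ∣ n ∧ e ^ s ∣ n)).card
        = Nat.gcd (d ^ s) (e ^ s) * (L * (N / L)) := by
          rw [hcard, ← Nat.gcd_mul_lcm (d ^ s) (e ^ s), mul_assoc]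
      _ ≤ Nat.gcd (d ^ s) (e ^ s) * N := by
          exact Nat.mul_le_mul_left _ (by rw [mul_comm]; exact Nat.div_mul_le_self N L)
      _ ≤ G * N := Nat.mul_le_mul_right _ hgcd_le
      _ = N * G := mul_comm _ _
  -- the main ℕ inequality
  have main : (∑ n ∈ Finset.Icc 1 N,
      (∑ d ∈ r.divisors.filter (fun d => d ^ s ∣ n), d ^ s) *
      (∑ e ∈ k.divisors.filter (fun e => e ^ s ∣ n), e ^ s))
      ≤ N * taus s (r ^ s) * taus s (k ^ s) * G := by
    have expand : ∀ n, (∑ d ∈ r.divisors.filter (fun d => d ^ s ∣ n), d ^ s) *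
        (∑ e ∈ k.divisors.filter (fun e => e ^ s ∣ n), e ^ s)
        = ∑ d ∈ r.divisors, ∑ e ∈ k.divisors,
            (if d ^ s ∣ n ∧ e ^ s ∣ n then d ^ s * e ^ s else 0) := by
      intro n
      rw [Finset.sum_filter, Finset.sum_filter, Finset.sum_mul_sum]
      refine Finset.sum_congr rfl fun d _ => Finset.sum_congr rfl fun e _ => ?_
      by_cases h1 : d ^ s ∣ n <;> by_cases h2 : e ^ s ∣ n <;> simp [h1, h2]
    calc (∑ n ∈ Finset.Icc 1 N,
          (∑ d ∈ r.divisors.filter (fun d => d ^ s ∣ n), d ^ s) *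
          (∑ e ∈ k.divisors.filter (fun e => e ^ s ∣ n), e ^ s))
        = ∑ d ∈ r.divisors, ∑ e ∈ k.divisors, ∑ n ∈ Finset.Icc 1 N,
            (if d ^ s ∣ n ∧ e ^ s ∣ n then d ^ s * e ^ s else 0) := by
          simp_rw [expand]
          rw [Finset.sum_comm]
          exact Finset.sum_congr rfl fun d _ => Finset.sum_comm
      _ = ∑ d ∈ r.divisors, ∑ e ∈ k.divisors,
            d ^ s * e ^ s * ((Finset.Icc 1 N).filter (fun n => d ^ s ∣ n ∧ e ^ s ∣ n)).card := by
          refine Finset.sum_congr rfl fun d _ => Finset.sum_congr rfl fun e _ => ?_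
          rw [← Finset.sum_filter, Finset.sum_const, smul_eq_mul, mul_comm]
      _ ≤ ∑ d ∈ r.divisors, ∑ e ∈ k.divisors, N * G := by
          exact Finset.sum_le_sum fun d hd => Finset.sum_le_sum fun e he => count_bound d hd e he
      _ = r.divisors.card * (k.divisors.card * (N * G)) := by
          simp [Finset.sum_const, mul_assoc]
      _ = N * taus s (r ^ s) * taus s (k ^ s) * G := by
          rw [taus_pow_eq s r hs hr, taus_pow_eq s k hs hk]; ring
  -- put it together over ℤ
  calc (∑ n ∈ Finset.Icc 1 N, CRsumD s r n * CRsumD s k n)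
      ≤ ∑ n ∈ Finset.Icc 1 N,
          (((∑ d ∈ r.divisors.filter (fun d => d ^ s ∣ n), d ^ s) *
            (∑ e ∈ k.divisors.filter (fun e => e ^ s ∣ n), e ^ s) : ℕ) : ℤ) := by
        refine Finset.sum_le_sum fun n _ => ?_
        rw [Nat.cast_mul]
        calc CRsumD s r n * CRsumD s k n ≤ |CRsumD s r n * CRsumD s k n| := le_abs_self _
          _ = |CRsumD s r n| * |CRsumD s k n| := abs_mul _ _
          _ ≤ _ := by
              refine mul_le_mul (CRsumD_abs_le s r n) (CRsumD_abs_le s k n) (abs_nonneg _) ?_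
              positivity
    _ = ((∑ n ∈ Finset.Icc 1 N,
          (∑ d ∈ r.divisors.filter (fun d => d ^ s ∣ n), d ^ s) *
          (∑ e ∈ k.divisors.filter (fun e => e ^ s ∣ n), e ^ s) : ℕ) : ℤ) := by
        push_cast; rfl
    _ ≤ ((N * taus s (r ^ s) * taus s (k ^ s) * G : ℕ) : ℤ) := Int.ofNat_le.mpr main
    _ = (N : ℤ) * taus s (r ^ s) * taus s (k ^ s) * sgcd s (r ^ s) (k ^ s) := by
        rw [hG]; push_cast; ring
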